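/- The variance of the propensity-weighted estimator equals Var[R̂(ŷ|e,s)] = (1/n²) Σᵢ yᵢ eᵢ(1−eᵢ) · ((δ₁(ŷᵢ)−δ₀(ŷᵢ))/eᵢ)², where sᵢ are independent Bernoulli(yᵢeᵢ). -/

import Mathlib

open MeasureTheory ProbabilityTheory Finset
open scoped ENNReal

lemma aux_variance_add_const {Ω : Type*} [MeasurableSpace Ω] {μ : Measure Ω}
    [IsProbabilityMeasure μ] {X : Ω → ℝ} (hX : MemLp X 2 μ) (c : ℝ) :
    variance (fun ω => X ω + c) μ = variance X μ := by
  have h1 : MemLp (fun ω => X ω + c) 2 μ := hX.add (memLp_const c)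
  have hi : μ[fun ω => X ω + c] = μ[X] + c := by
    rw [integral_add (hX.integrable one_le_two) (integrable_const c)]
    simp
  rw [variance_eq_integral h1.aemeasurable, variance_eq_integral hX.aemeasurable]
  congr 1
  funext ω
  simp only [Pi.pow_apply, Pi.sub_apply, hi]
  ring

lemma aux_bern_integral {Ω : Type*} [MeasurableSpace Ω] {μ : Measure Ω} [IsProbabilityMeasure μ]
    {s : Ω → ℝ} (hm : Measurable s) (h01 : ∀ ω, s ω = 0 ∨ s ω = 1)
    {p : ℝ} (hp0 : 0 ≤ p) (hμ : μ {ω | s ω = 1} = ENNReal.ofReal p) :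
    μ[s] = p := by
  have hset : MeasurableSet {ω | s ω = 1} := hm (measurableSet_singleton 1)
  have hind : s = Set.indicator {ω | s ω = 1} (fun _ => (1:ℝ)) := by
    funext ω
    rcases h01 ω with h | h <;> simp [Set.indicator_apply, h]
  rw [hind, integral_indicator_const _ hset, measureReal_def, hμ, ENNReal.toReal_ofReal hp0]
  simp

lemma aux_bern_memLp {Ω : Type*} [MeasurableSpace Ω] {μ : Measure Ω} [IsProbabilityMeasure μ]
    {s : Ω → ℝ} (hm : Measurable s) (h01 : ∀ ω, s ω = 0 ∨ s ω = 1) :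
    MemLp s 2 μ := by
  refine MemLp.of_bound hm.aestronglyMeasurable 1 (ae_of_all _ fun ω => ?_)
  rcases h01 ω with h | h <;> simp [h]

lemma aux_bern_variance {Ω : Type*} [MeasurableSpace Ω] {μ : Measure Ω} [IsProbabilityMeasure μ]
    {s : Ω → ℝ} (hm : Measurable s) (h01 : ∀ ω, s ω = 0 ∨ s ω = 1)
    {p : ℝ} (hp0 : 0 ≤ p) (hμ : μ {ω | s ω = 1} = ENNReal.ofReal p) :
    variance s μ = p * (1 - p) := by
  have hs2 : MemLp s 2 μ := aux_bern_memLp hm h01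
  have hsq : s ^ 2 = s := by
    funext ω
    rcases h01 ω with h | h <;> simp [h]
  rw [variance_eq_sub hs2, hsq, aux_bern_integral hm h01 hp0 hμ]
  ring

/-- The variance of the propensity-weighted estimator with independent labels
`sᵢ ~ Bernoulli(yᵢeᵢ)` equals
`(1/n²) Σᵢ yᵢ eᵢ (1-eᵢ) ((δ₁(ŷᵢ) - δ₀(ŷᵢ)) / eᵢ)²`. -/
theorem propensity_weighted_estimator_variance
    {Ω : Type*} [MeasurableSpace Ω] (μ : Measure Ω) [IsProbabilityMeasure μ]
    (n : ℕ) (hn : 0 < n)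
    (y : Fin n → ℝ) (hy : ∀ i, y i = 0 ∨ y i = 1)
    (yhat : Fin n → ℝ) (hyhat : ∀ i, yhat i ∈ Set.Ioo (0:ℝ) 1)
    (e : Fin n → ℝ) (he : ∀ i, e i ∈ Set.Ioc (0:ℝ) 1)
    (δ₀ δ₁ : ℝ → ℝ)
    (s : Fin n → Ω → ℝ) (hsMeas : ∀ i, Measurable (s i))
    (hs01 : ∀ i ω, s i ω = 0 ∨ s i ω = 1)
    (hsBern : ∀ i, μ {ω | s i ω = 1} = ENNReal.ofReal (y i * e i))
    (hsIndep : iIndepFun s μ) :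
    variance (fun ω => (1 / (n:ℝ)) * ∑ i, (s i ω * ((1 / e i) * δ₁ (yhat i)
        + (1 - 1 / e i) * δ₀ (yhat i)) + (1 - s i ω) * δ₀ (yhat i))) μ
    = (1 / (n:ℝ) ^ 2) * ∑ i, y i * e i * (1 - e i)
        * ((δ₁ (yhat i) - δ₀ (yhat i)) / e i) ^ 2 := by
  set c : Fin n → ℝ := fun i => (δ₁ (yhat i) - δ₀ (yhat i)) / e i with hc
  set d : Fin n → ℝ := fun i => δ₀ (yhat i) with hd
  have hrw : ∀ i (ω : Ω), s i ω * ((1 / e i) * δ₁ (yhat i)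
      + (1 - 1 / e i) * δ₀ (yhat i)) + (1 - s i ω) * δ₀ (yhat i)
      = c i * s i ω + d i := by
    intro i ω
    have hei : e i ≠ 0 := ne_of_gt (he i).1
    field_simp [hc, hd]
    simp only [hc, hd]
    field_simp
    ring
  have hp0 : ∀ i, 0 ≤ y i * e i := fun i => by
    rcases hy i with h | h <;> simp [h]
    · exact le_of_lt (he i).1
  -- memLp of summands
  have hmem : ∀ i, MemLp (fun ω => c i * s i ω + d i) 2 μ := fun i =>
    ((aux_bern_memLp (hsMeas i) (hs01 i)).const_mul (c i)).add (memLp_const (d i))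
  -- variance of each summand
  have hvar : ∀ i, variance (fun ω => c i * s i ω + d i) μ
      = (c i) ^ 2 * (y i * e i * (1 - y i * e i)) := by
    intro i
    rw [aux_variance_add_const (((aux_bern_memLp (hsMeas i) (hs01 i)).const_mul (c i))) (d i),
      variance_const_mul, aux_bern_variance (hsMeas i) (hs01 i) (hp0 i) (hsBern i)]
  -- pairwise independence of summands
  have hpind : Set.Pairwise (↑(Finset.univ : Finset (Fin n)))
      (fun i j => IndepFun (fun ω => c i * s i ω + d i) (fun ω => c j * s j ω + d j) μ) := by
    intro i _ j _ hij
    exact (hsIndep.indepFun hij).comp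
      ((measurable_id.const_mul (c i)).add_const (d i))
      ((measurable_id.const_mul (c j)).add_const (d j))
  have hsum : variance (∑ i, fun ω => c i * s i ω + d i) μ
      = ∑ i, (c i) ^ 2 * (y i * e i * (1 - y i * e i)) := by
    rw [IndepFun.variance_sum (fun i _ => hmem i) hpind]
    exact Finset.sum_congr rfl fun i _ => hvar i
  have hfun : (fun ω => (1 / (n:ℝ)) * ∑ i, (s i ω * ((1 / e i) * δ₁ (yhat i)
      + (1 - 1 / e i) * δ₀ (yhat i)) + (1 - s i ω) * δ₀ (yhat i)))
      = fun ω => (1 / (n:ℝ)) * (∑ i, fun ω => c i * s i ω + d i) ω := by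
    funext ω
    simp only [Finset.sum_apply]
    congr 1
    exact Finset.sum_congr rfl fun i _ => hrw i ω
  rw [hfun, variance_const_mul, hsum]
  rw [one_div, one_div, inv_pow]
  congr 1
  refine Finset.sum_congr rfl fun i _ => ?_
  rcases hy i with h | h <;> simp [h] <;> ring
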